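/- For all m, n ∈ ℕ, let K_{m,n} be the diagonal F-linear endomorphism of V_{m+n} with K_{m,n}(e_{ι₁ i}) = q^{m−1−2i} · e_{ι₁ i} for i ∈ Fin m and K_{m,n}(e_{ι₂ j}) = q^{n−1−2j} · e_{ι₂ j} for j ∈ Fin n. Then: (a) ptr₂((id ⊗ K_{m,n}) ∘ c_{m,n}) = q^m · P₁ + q^n · P₂, where P₁ (resp. P₂) is the projection of V_{m+n} fixing each e_{ι₁ i} (resp. each e_{ι₂ j}) and annihilating the other basis vectors; and (b) the trace of K_{m,n} equals [m]_q + [n]_q. (These are the GL_m × GL_n specializations of the modified twist and dimension relations in the paper's Lemma on Rep_q L_t.) -/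

import Mathlib

open scoped TensorProduct

set_option synthInstance.maxHeartbeats 1000000
set_option maxHeartbeats 1000000
noncomputable section

abbrev F : Type := RatFunc ℂ

def q : F := RatFunc.X

abbrev V (N : ℕ) : Type := Fin N → F

def bV (N : ℕ) : Module.Basis (Fin N) F (V N) := Pi.basisFun F (Fin N)

def e {N : ℕ} (i : Fin N) : V N := bV N i

def bVV (N : ℕ) : Module.Basis (Fin N × Fin N) F (V N ⊗[F] V N) :=
  (bV N).tensorProduct (bV N)

/-- The HOMFLY R-matrix β_N. -/
def β (N : ℕ) : V N ⊗[F] V N →ₗ[F] V N ⊗[F] V N :=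
  (bVV N).constr F fun p =>
    if p.1 = p.2 then q • (e p.1 ⊗ₜ[F] e p.1)
    else if p.1 < p.2 then e p.2 ⊗ₜ[F] e p.1
    else e p.2 ⊗ₜ[F] e p.1 + (q - q⁻¹) • (e p.1 ⊗ₜ[F] e p.2)

/-- Linear inclusion induced by a map of index sets. -/
def emb {a N : ℕ} (f : Fin a → Fin N) : V a →ₗ[F] V N :=
  (bV a).constr F fun i => e (f i)

def ι₁ (m n : ℕ) : Fin m → Fin (m + n) := Fin.castAdd n
def ι₂ (m n : ℕ) : Fin n → Fin (m + n) := Fin.natAdd m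

/-- The Levi braiding c_{m,n}. -/
def levi (m n : ℕ) : V (m + n) ⊗[F] V (m + n) →ₗ[F] V (m + n) ⊗[F] V (m + n) :=
  (bVV (m + n)).constr F fun p =>
    if ha : (p.1 : ℕ) < m then
      if hb : (p.2 : ℕ) < m then
        TensorProduct.map (emb (ι₁ m n)) (emb (ι₁ m n))
          (β m (e ⟨p.1, ha⟩ ⊗ₜ[F] e ⟨p.2, hb⟩))
      else e p.2 ⊗ₜ[F] e p.1
    else
      if hb : (p.2 : ℕ) < m then e p.2 ⊗ₜ[F] e p.1
      else
        TensorProduct.map (emb (ι₂ m n)) (emb (ι₂ m n))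
          (β n (e ⟨(p.1 : ℕ) - m, by have := p.1.isLt; omega⟩ ⊗ₜ[F]
                e ⟨(p.2 : ℕ) - m, by have := p.2.isLt; omega⟩))

/-- Partial trace over the second tensor factor. -/
def ptr {N : ℕ} (Φ : V N ⊗[F] V N →ₗ[F] V N ⊗[F] V N) : V N →ₗ[F] V N :=
  (bV N).constr F fun i =>
    ∑ j : Fin N,
      (TensorProduct.rid F (V N))
        (TensorProduct.map LinearMap.id (LinearMap.proj j) (Φ (e i ⊗ₜ[F] e j)))

/-- Quantum integer [n]_q. -/
def qint (n : ℤ) : F := (q ^ n - q ^ (-n)) / (q - q⁻¹)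

/-- The diagonal operator `K_{m,n}` with `K (e (ι₁ i)) = q^(m-1-2i) • e (ι₁ i)` and
`K (e (ι₂ j)) = q^(n-1-2j) • e (ι₂ j)`. -/
def Kmn (m n : ℕ) : V (m + n) →ₗ[F] V (m + n) :=
  (bV (m + n)).constr F fun a =>
    if (a : ℕ) < m then (q ^ ((m : ℤ) - 1 - 2 * (a.val : ℤ))) • e a
    else (q ^ ((n : ℤ) - 1 - 2 * ((a.val : ℤ) - (m : ℤ)))) • e a

/-- The projection of `V (m+n)` onto the green block spanned by the `e (ι₁ i)`. -/
def P1 (m n : ℕ) : V (m + n) →ₗ[F] V (m + n) :=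
  (bV (m + n)).constr F fun a => if (a : ℕ) < m then e a else 0

/-- The projection of `V (m+n)` onto the red block spanned by the `e (ι₂ j)`. -/
def P2 (m n : ℕ) : V (m + n) →ₗ[F] V (m + n) :=
  (bV (m + n)).constr F fun a => if m ≤ (a : ℕ) then e a else 0

-- auxiliary lemmas (to be inserted before the theorem)
lemma q_ne : q ≠ 0 := RatFunc.X_ne_zero

lemma qq_ne : q - q⁻¹ ≠ 0 := by
  intro h
  have h2 : q * q = 1 := by
    have h1 := sub_eq_zero.mp h
    calc q * q = q * q⁻¹ := by rw [← h1]
    _ = 1 := mul_inv_cancel₀ q_ne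
  have h3 : (Polynomial.X * Polynomial.X : Polynomial ℂ) = 1 := by
    apply IsFractionRing.injective (Polynomial ℂ) F
    push_cast [q, RatFunc.X] at h2 ⊢
    simpa using h2
  have := congrArg (Polynomial.eval 0) h3
  simp at this

lemma qmul (d : ℤ) : q * q ^ (d - 1) = q ^ d := by
  rw [zpow_sub_one₀ q_ne]
  field_simp
  exact mul_div_cancel_left₀ _ q_ne

lemma qstep (d : ℤ) : (q - q⁻¹) * q ^ (d - 1) = q ^ d - q ^ (d - 2) := by
  have h2 : q⁻¹ * q ^ (d - 1) = q ^ (d - 2) := by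
    rw [show d - 2 = d - 1 - 1 by ring, zpow_sub_one₀ q_ne (d-1)]
    ring
  rw [sub_mul, qmul, h2]

lemma tele (c : ℤ) (a : ℕ) :
    ∑ k ∈ Finset.range a, (q - q⁻¹) * q ^ (c - 1 - 2 * (k : ℤ)) = q ^ c - q ^ (c - 2 * (a : ℤ)) := by
  induction a with
  | zero => simp
  | succ a ih =>
    rw [Finset.sum_range_succ, ih]
    rw [show c - 1 - 2 * (a : ℤ) = (c - 2 * (a : ℤ)) - 1 by ring, qstep]
    push_cast
    ring_nf

lemma qint_eq (c : ℕ) : qint c = ∑ k ∈ Finset.range c, q ^ ((c : ℤ) - 1 - 2 * (k : ℤ)) := by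
  rw [qint, div_eq_iff qq_ne, Finset.sum_mul]
  have h := tele c c
  rw [show (c:ℤ) - 2 * (c:ℤ) = -(c:ℤ) by ring] at h
  rw [← h]
  exact Finset.sum_congr rfl fun k _ => mul_comm _ _

lemma bVV_apply (N : ℕ) (i j : Fin N) : bVV N (i,j) = e i ⊗ₜ[F] e j := by
  simp [bVV, e, Module.Basis.tensorProduct_apply]

lemma e_def {N : ℕ} (i : Fin N) : bV N i = e i := rfl

lemma emb_e {a N : ℕ} (f : Fin a → Fin N) (i : Fin a) : emb f (e i) = e (f i) := by
  rw [emb, e, Module.Basis.constr_basis]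

lemma β_e (N : ℕ) (i j : Fin N) : β N (e i ⊗ₜ[F] e j) =
    if i = j then q • (e i ⊗ₜ[F] e i)
    else if i < j then e j ⊗ₜ[F] e i
    else e j ⊗ₜ[F] e i + (q - q⁻¹) • (e i ⊗ₜ[F] e j) := by
  conv_lhs => rw [← bVV_apply, β, Module.Basis.constr_basis]

lemma levi_e (m n : ℕ) (a b : Fin (m+n)) : levi m n (e a ⊗ₜ[F] e b) =
    if ha : (a : ℕ) < m then
      if hb : (b : ℕ) < m then
        TensorProduct.map (emb (ι₁ m n)) (emb (ι₁ m n))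
          (β m (e ⟨a, ha⟩ ⊗ₜ[F] e ⟨b, hb⟩))
      else e b ⊗ₜ[F] e a
    else
      if hb : (b : ℕ) < m then e b ⊗ₜ[F] e a
      else
        TensorProduct.map (emb (ι₂ m n)) (emb (ι₂ m n))
          (β n (e ⟨(a : ℕ) - m, by have := a.isLt; omega⟩ ⊗ₜ[F]
                e ⟨(b : ℕ) - m, by have := b.isLt; omega⟩)) := by
  conv_lhs => rw [← bVV_apply, levi, Module.Basis.constr_basis]

lemma Kmn_e (m n : ℕ) (a : Fin (m+n)) : Kmn m n (e a) =
    if (a : ℕ) < m then (q ^ ((m : ℤ) - 1 - 2 * (a.val : ℤ))) • e a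
    else (q ^ ((n : ℤ) - 1 - 2 * ((a.val : ℤ) - (m : ℤ)))) • e a := by
  conv_lhs => rw [Kmn, e, Module.Basis.constr_basis]

lemma ptr_e {N : ℕ} (Φ : V N ⊗[F] V N →ₗ[F] V N ⊗[F] V N) (i : Fin N) :
    ptr Φ (e i) = ∑ j : Fin N,
      (TensorProduct.rid F (V N))
        (TensorProduct.map LinearMap.id (LinearMap.proj j) (Φ (e i ⊗ₜ[F] e j))) := by
  conv_lhs => rw [ptr, e, Module.Basis.constr_basis]

lemma P1_e (m n : ℕ) (a : Fin (m+n)) :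
    P1 m n (e a) = if (a : ℕ) < m then e a else 0 := by
  conv_lhs => rw [P1, e, Module.Basis.constr_basis]

lemma P2_e (m n : ℕ) (a : Fin (m+n)) :
    P2 m n (e a) = if m ≤ (a : ℕ) then e a else 0 := by
  conv_lhs => rw [P2, e, Module.Basis.constr_basis]

lemma proj_e {N : ℕ} (j c : Fin N) :
    (LinearMap.proj j : V N →ₗ[F] F) (e c) = if j = c then 1 else 0 := by
  simp [e, bV, Pi.basisFun_apply, LinearMap.proj_apply, Pi.single_apply]

lemma ι₁_mk (m n : ℕ) (a : Fin (m+n)) (h : (a : ℕ) < m) : ι₁ m n ⟨a, h⟩ = a := by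
  ext; simp [ι₁]

lemma ι₂_mk (m n : ℕ) (a : Fin (m+n)) (h : ¬ (a : ℕ) < m)
    (hh : (a:ℕ) - m < n) : ι₂ m n ⟨(a : ℕ) - m, hh⟩ = a := by
  ext; simp [ι₂]; omega

lemma key_green (m n : ℕ) (a : Fin (m+n)) (haa : (a:ℕ) < m) (j : Fin (m+n)) :
    (TensorProduct.rid F (V (m+n))) (TensorProduct.map LinearMap.id (LinearMap.proj j)
      ((TensorProduct.map LinearMap.id (Kmn m n) ∘ₗ levi m n) (e a ⊗ₜ[F] e j)))
    = (if j = a then q ^ ((m:ℤ) - 2 * ((a:ℕ):ℤ))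
       else if (j:ℕ) < (a:ℕ) then (q - q⁻¹) * q ^ ((m:ℤ) - 1 - 2 * ((j:ℕ):ℤ)) else 0) • e a := by
  by_cases hj : (j:ℕ) < m
  · by_cases hja : j = a
    · subst hja
      rw [LinearMap.comp_apply, levi_e, dif_pos haa, dif_pos haa, β_e, if_pos rfl]
      simp only [map_smul, TensorProduct.map_tmul, emb_e, ι₁_mk, LinearMap.id_apply,
        Kmn_e, if_pos haa, TensorProduct.tmul_smul, proj_e, if_pos rfl,
        TensorProduct.rid_tmul, smul_smul, one_smul, if_true, mul_one]
      rw [show (m:ℤ) - 1 - 2*((j:ℕ):ℤ) = ((m:ℤ) - 2*((j:ℕ):ℤ)) - 1 by ring, qmul]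
    · rcases Nat.lt_or_ge (j:ℕ) (a:ℕ) with hlt | hge
      · rw [LinearMap.comp_apply, levi_e, dif_pos haa, dif_pos hj, β_e,
          if_neg (by simp only [Fin.mk.injEq]; omega),
          if_neg (by simp only [Fin.mk_lt_mk]; omega)]
        simp [map_add, map_smul, TensorProduct.map_tmul, emb_e, ι₁_mk,
          LinearMap.id_apply, Kmn_e, haa, hj, TensorProduct.tmul_smul,
          proj_e, TensorProduct.rid_tmul, smul_smul, hja, hlt, smul_eq_mul]
      · have hlt : (a:ℕ) < (j:ℕ) := by
          rcases Nat.lt_or_ge (a:ℕ) (j:ℕ) with h | h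
          · exact h
          · exact absurd (Fin.ext (by omega)) hja
        rw [LinearMap.comp_apply, levi_e, dif_pos haa, dif_pos hj, β_e,
          if_neg (by simp only [Fin.mk.injEq]; omega),
          if_pos (by simp only [Fin.mk_lt_mk]; omega)]
        simp [map_smul, TensorProduct.map_tmul, emb_e, ι₁_mk,
          LinearMap.id_apply, Kmn_e, haa, hj, TensorProduct.tmul_smul,
          proj_e, TensorProduct.rid_tmul, smul_smul, hja, smul_eq_mul,
          (by omega : ¬ (j:ℕ) < (a:ℕ)), (by omega : ¬ j = a)]
        exact fun h => absurd (Fin.lt_def.mp h) (by omega)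
  · rw [LinearMap.comp_apply, levi_e, dif_pos haa, dif_neg hj]
    have h1 : ¬ j = a := by intro h; rw [h] at hj; exact hj haa
    simp [map_smul, TensorProduct.map_tmul,
      LinearMap.id_apply, Kmn_e, haa, hj, TensorProduct.tmul_smul,
      proj_e, TensorProduct.rid_tmul, smul_smul, smul_eq_mul, h1,
      (by omega : ¬ (j:ℕ) < (a:ℕ))]
    exact fun h => absurd (Fin.lt_def.mp h) (by omega)

lemma hsum_green (m n : ℕ) (a : Fin (m+n)) (haa : (a:ℕ) < m) :
    (∑ j : Fin (m+n),
      (if j = a then q ^ ((m:ℤ) - 2 * ((a:ℕ):ℤ))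
       else if (j:ℕ) < (a:ℕ) then (q - q⁻¹) * q ^ ((m:ℤ) - 1 - 2 * ((j:ℕ):ℤ)) else 0))
    = q ^ (m:ℤ) := by
  have split : ∀ j : Fin (m+n),
      (if j = a then q ^ ((m:ℤ) - 2 * ((a:ℕ):ℤ))
       else if (j:ℕ) < (a:ℕ) then (q - q⁻¹) * q ^ ((m:ℤ) - 1 - 2 * ((j:ℕ):ℤ)) else 0)
      = (if j = a then q ^ ((m:ℤ) - 2 * ((a:ℕ):ℤ)) else 0)
        + (if (j:ℕ) < (a:ℕ) then (q - q⁻¹) * q ^ ((m:ℤ) - 1 - 2 * ((j:ℕ):ℤ)) else 0) := by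
    intro j
    by_cases h1 : j = a
    · subst h1; simp
    · simp [h1]
  simp only [split, Finset.sum_add_distrib, Finset.sum_ite_eq', Finset.mem_univ, if_true]
  rw [Fin.sum_univ_eq_sum_range
    (fun k : ℕ => if k < (a:ℕ) then (q - q⁻¹) * q ^ ((m:ℤ) - 1 - 2 * (k:ℤ)) else 0)]
  rw [← Finset.sum_subset (Finset.range_subset_range.mpr (by omega : (a:ℕ) ≤ m + n))
    (fun x _ hx => if_neg (by simp at hx; omega))]
  rw [Finset.sum_congr rfl (fun k hk => if_pos (Finset.mem_range.mp hk)), tele]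
  ring

lemma key_red (m n : ℕ) (a : Fin (m+n)) (haa : ¬ (a:ℕ) < m) (j : Fin (m+n)) :
    (TensorProduct.rid F (V (m+n))) (TensorProduct.map LinearMap.id (LinearMap.proj j)
      ((TensorProduct.map LinearMap.id (Kmn m n) ∘ₗ levi m n) (e a ⊗ₜ[F] e j)))
    = (if j = a then q ^ ((n:ℤ) - 2 * (((a:ℕ) - m : ℕ):ℤ))
       else if m ≤ (j:ℕ) ∧ (j:ℕ) < (a:ℕ) then
         (q - q⁻¹) * q ^ ((n:ℤ) - 1 - 2 * ((((j:ℕ) - m : ℕ)):ℤ)) else 0) • e a := by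
  have hc : (((a:ℕ) - m : ℕ) : ℤ) = ((a:ℕ):ℤ) - (m:ℤ) := by omega
  by_cases hj : (j:ℕ) < m
  · rw [LinearMap.comp_apply, levi_e, dif_neg haa, dif_pos hj]
    have h1 : ¬ j = a := by intro h; rw [h] at hj; exact haa hj
    simp [map_smul, TensorProduct.map_tmul,
      LinearMap.id_apply, Kmn_e, haa, hj, TensorProduct.tmul_smul,
      proj_e, TensorProduct.rid_tmul, smul_smul, smul_eq_mul, h1,
      (by omega : ¬ m ≤ (j:ℕ))]
  · by_cases hja : j = a
    · subst hja
      rw [LinearMap.comp_apply, levi_e, dif_neg haa, dif_neg hj, β_e, if_pos rfl,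
        map_smul, TensorProduct.map_tmul, emb_e, ι₂_mk m n j hj (by omega)]
      simp only [map_smul, TensorProduct.map_tmul, LinearMap.id_apply,
        Kmn_e, if_neg haa, TensorProduct.tmul_smul, proj_e, if_pos rfl,
        TensorProduct.rid_tmul, smul_smul, one_smul, if_true, mul_one]
      rw [hc,
        show (n:ℤ) - 1 - 2*(((j:ℕ):ℤ) - (m:ℤ)) = ((n:ℤ) - 2*(((j:ℕ):ℤ) - (m:ℤ))) - 1 by ring,
        qmul]
    · have hcj : (((j:ℕ) - m : ℕ) : ℤ) = ((j:ℕ):ℤ) - (m:ℤ) := by omega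
      rcases Nat.lt_or_ge (j:ℕ) (a:ℕ) with hlt | hge
      · rw [LinearMap.comp_apply, levi_e, dif_neg haa, dif_neg hj, β_e,
          if_neg (by simp only [Fin.mk.injEq]; omega),
          if_neg (by simp only [Fin.mk_lt_mk]; omega)]
        simp [map_add, map_smul, TensorProduct.map_tmul, emb_e, ι₂_mk,
          LinearMap.id_apply, Kmn_e, haa, hj, TensorProduct.tmul_smul,
          proj_e, TensorProduct.rid_tmul, smul_smul, hja, hlt, smul_eq_mul, hcj,
          (by omega : m ≤ (j:ℕ))]
      · have hlt : (a:ℕ) < (j:ℕ) := by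
          rcases Nat.lt_or_ge (a:ℕ) (j:ℕ) with h | h
          · exact h
          · exact absurd (Fin.ext (by omega)) hja
        rw [LinearMap.comp_apply, levi_e, dif_neg haa, dif_neg hj, β_e,
          if_neg (by simp only [Fin.mk.injEq]; omega),
          if_pos (by simp only [Fin.mk_lt_mk]; omega)]
        simp [map_smul, TensorProduct.map_tmul, emb_e, ι₂_mk,
          LinearMap.id_apply, Kmn_e, haa, hj, TensorProduct.tmul_smul,
          proj_e, TensorProduct.rid_tmul, smul_smul, hja, smul_eq_mul,
          (by omega : ¬ (j:ℕ) < (a:ℕ)), (by omega : ¬ j = a)]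
        exact fun _ h2 => absurd (Fin.lt_def.mp h2) (by omega)

lemma hsum_red (m n : ℕ) (a : Fin (m+n)) (haa : ¬ (a:ℕ) < m) :
    (∑ j : Fin (m+n),
      (if j = a then q ^ ((n:ℤ) - 2 * (((a:ℕ) - m : ℕ):ℤ))
       else if m ≤ (j:ℕ) ∧ (j:ℕ) < (a:ℕ) then
         (q - q⁻¹) * q ^ ((n:ℤ) - 1 - 2 * ((((j:ℕ) - m : ℕ)):ℤ)) else 0))
    = q ^ (n:ℤ) := by
  have split : ∀ j : Fin (m+n),
      (if j = a then q ^ ((n:ℤ) - 2 * (((a:ℕ) - m : ℕ):ℤ))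
       else if m ≤ (j:ℕ) ∧ (j:ℕ) < (a:ℕ) then
         (q - q⁻¹) * q ^ ((n:ℤ) - 1 - 2 * ((((j:ℕ) - m : ℕ)):ℤ)) else 0)
      = (if j = a then q ^ ((n:ℤ) - 2 * (((a:ℕ) - m : ℕ):ℤ)) else 0)
        + (if m ≤ (j:ℕ) ∧ (j:ℕ) < (a:ℕ) then
            (q - q⁻¹) * q ^ ((n:ℤ) - 1 - 2 * ((((j:ℕ) - m : ℕ)):ℤ)) else 0) := by
    intro j
    by_cases h1 : j = a
    · subst h1; simp
    · simp [h1]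
  simp only [split, Finset.sum_add_distrib, Finset.sum_ite_eq', Finset.mem_univ, if_true]
  rw [Fin.sum_univ_eq_sum_range
    (fun k : ℕ => if m ≤ k ∧ k < (a:ℕ) then
      (q - q⁻¹) * q ^ ((n:ℤ) - 1 - 2 * (((k - m : ℕ)):ℤ)) else 0)]
  have e1 : (∑ k ∈ Finset.range (m+n), (if m ≤ k ∧ k < (a:ℕ) then
        (q - q⁻¹) * q ^ ((n:ℤ) - 1 - 2 * (((k - m : ℕ)):ℤ)) else 0))
      = ∑ k ∈ Finset.Ico m (a:ℕ),
        (q - q⁻¹) * q ^ ((n:ℤ) - 1 - 2 * (((k - m : ℕ)):ℤ)) := by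
    rw [← Finset.sum_filter]
    apply Finset.sum_congr _ (fun _ _ => rfl)
    ext x
    simp only [Finset.mem_filter, Finset.mem_range, Finset.mem_Ico]
    omega
  rw [e1, Finset.sum_Ico_eq_sum_range]
  have e2 : ∀ k, (q - q⁻¹) * q ^ ((n:ℤ) - 1 - 2 * (((m + k - m : ℕ)):ℤ))
      = (q - q⁻¹) * q ^ ((n:ℤ) - 1 - 2 * (k:ℤ)) := by
    intro k; congr 2; omega
  rw [Finset.sum_congr rfl (fun k _ => e2 k), tele]
  ring

/-- (a) The modified twist relation
`ptr₂((id ⊗ K_{m,n}) ∘ c_{m,n}) = q^m • P₁ + q^n • P₂`;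
(b) the modified dimension relation `trace K_{m,n} = [m]_q + [n]_q`. -/
theorem levi_modified_twist_and_dimension (m n : ℕ) :
    ptr (TensorProduct.map LinearMap.id (Kmn m n) ∘ₗ levi m n)
      = (q ^ (m : ℤ)) • P1 m n + (q ^ (n : ℤ)) • P2 m n ∧
    LinearMap.trace F (V (m + n)) (Kmn m n) = qint m + qint n := by
  constructor
  · apply (bV (m+n)).ext
    intro a
    simp only [e_def]
    rw [ptr_e]
    simp only [LinearMap.add_apply, LinearMap.smul_apply, P1_e, P2_e]
    by_cases haa : (a:ℕ) < m
    · simp only [fun j => key_green m n a haa j, ← Finset.sum_smul]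
      rw [if_pos haa, if_neg (by omega), smul_zero, add_zero, hsum_green m n a haa]
    · simp only [fun j => key_red m n a haa j, ← Finset.sum_smul]
      rw [if_neg haa, if_pos (by omega), smul_zero, zero_add, hsum_red m n a haa]
  · rw [LinearMap.trace_eq_matrix_trace F (bV (m+n)), Matrix.trace]
    have diag : ∀ a : Fin (m+n),
        (LinearMap.toMatrix (bV (m+n)) (bV (m+n)) (Kmn m n)).diag a =
        if (a : ℕ) < m then q ^ ((m : ℤ) - 1 - 2 * (a.val : ℤ))
        else q ^ ((n : ℤ) - 1 - 2 * ((a.val : ℤ) - (m : ℤ))) := by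
      intro a
      simp only [Matrix.diag, LinearMap.toMatrix_apply, e_def, Kmn_e]
      split_ifs <;>
        simp [bV, Pi.basisFun_repr, e, Pi.basisFun_apply, Pi.single_apply]
    simp only [diag]
    rw [Fin.sum_univ_add]
    have h1 : ∀ i : Fin m,
        (if ((Fin.castAdd n i : Fin (m+n)) : ℕ) < m then
          q ^ ((m : ℤ) - 1 - 2 * (((Fin.castAdd n i : Fin (m+n)).val : ℤ)))
        else q ^ ((n : ℤ) - 1 - 2 * (((Fin.castAdd n i : Fin (m+n)).val : ℤ) - (m : ℤ))))
        = q ^ ((m : ℤ) - 1 - 2 * ((i : ℕ) : ℤ)) := by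
      intro i
      rw [if_pos]
      · simp
      · simpa using i.isLt
    have h2 : ∀ i : Fin n,
        (if ((Fin.natAdd m i : Fin (m+n)) : ℕ) < m then
          q ^ ((m : ℤ) - 1 - 2 * (((Fin.natAdd m i : Fin (m+n)).val : ℤ)))
        else q ^ ((n : ℤ) - 1 - 2 * (((Fin.natAdd m i : Fin (m+n)).val : ℤ) - (m : ℤ))))
        = q ^ ((n : ℤ) - 1 - 2 * ((i : ℕ) : ℤ)) := by
      intro i
      rw [if_neg]
      · norm_num
      · simp
    rw [Finset.sum_congr rfl fun i _ => h1 i, Finset.sum_congr rfl fun i _ => h2 i]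
    rw [Fin.sum_univ_eq_sum_range (fun k : ℕ => q ^ ((m : ℤ) - 1 - 2 * (k : ℤ))),
        Fin.sum_univ_eq_sum_range (fun k : ℕ => q ^ ((n : ℤ) - 1 - 2 * (k : ℤ))),
        ← qint_eq, ← qint_eq]

end
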